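/- Let d ≥ 1 and let (U(s,t))_{s≤t} be a Feller evolution system on C₀(ℝ^d). Then for every t ≥ 0, f ∈ C₀(ℝ × ℝ^d) and ε > 0 there exists R > 0 such that |(U(s,s+t) f(s+t,·))(x)| < ε whenever (s,x) ∈ ℝ × ℝ^d satisfies s² + |x|² > R²; i.e., the function (s,x) ↦ (U(s,s+t) f(s+t,·))(x) vanishes at infinity. -/

import Mathlib

open Filter Topology
open scoped ZeroAtInfty

/-- `U` is a Feller evolution system on `C₀(ℝ^d)`: each `U(s,t)` (for `s ≤ t`) is a
positivity-preserving linear contraction of `C₀(ℝ^d)` into itself, `U(s,s) = id`,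
`U(s,t) = U(s,r) ∘ U(r,t)` for `s ≤ r ≤ t`, and `(s,t) ↦ U(s,t)f` is jointly strongly
continuous on `{(s,t) : s ≤ t}`. -/
def IsFellerEvolution {d : ℕ}
    (U : ℝ → ℝ → (EuclideanSpace ℝ (Fin d) →C₀ ℝ) →ₗ[ℝ] (EuclideanSpace ℝ (Fin d) →C₀ ℝ)) :
    Prop :=
  (∀ s t, s ≤ t → ∀ f, ‖U s t f‖ ≤ ‖f‖) ∧
  (∀ s t, s ≤ t → ∀ f, (∀ x, 0 ≤ f x) → ∀ x, 0 ≤ U s t f x) ∧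
  (∀ s, U s s = LinearMap.id) ∧
  (∀ s r t, s ≤ r → r ≤ t → U s t = (U s r) ∘ₗ (U r t)) ∧
  (∀ (f : EuclideanSpace ℝ (Fin d) →C₀ ℝ) (v w : ℝ), v ≤ w →
    Tendsto (fun p : ℝ × ℝ => ‖U p.1 p.2 f - U v w f‖)
      (𝓝[{p : ℝ × ℝ | p.1 ≤ p.2}] (v, w)) (𝓝 0))

/-- The time slice `f(r,·)` of `f ∈ C₀(ℝ × ℝ^d)`, as an element of `C₀(ℝ^d)`. -/
noncomputable def timeSlice {d : ℕ} (f : (ℝ × EuclideanSpace ℝ (Fin d)) →C₀ ℝ) (r : ℝ) :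
    EuclideanSpace ℝ (Fin d) →C₀ ℝ where
  toFun x := f (r, x)
  continuous_toFun := f.continuous.comp (Continuous.prodMk_right r)
  zero_at_infty' := by
    have h : IsClosedEmbedding (fun x : EuclideanSpace ℝ (Fin d) =>
        ((r, x) : ℝ × EuclideanSpace ℝ (Fin d))) := by
      refine ⟨isEmbedding_prodMkRight r, ?_⟩
      have hr : Set.range (fun x : EuclideanSpace ℝ (Fin d) =>
          ((r, x) : ℝ × EuclideanSpace ℝ (Fin d))) = {r} ×ˢ Set.univ := by
        ext p; simp [Set.mem_prod, eq_comm, Prod.ext_iff]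
      rw [hr]
      exact isClosed_singleton.prod isClosed_univ
    exact f.zero_at_infty'.comp h.tendsto_cocompact

/-- The space-time semigroup `T(t)f(s,x) := (U(s,s+t) f(s+t,·))(x)`, as a plain function on
`ℝ × ℝ^d`. -/
noncomputable def spaceTime {d : ℕ}
    (U : ℝ → ℝ → (EuclideanSpace ℝ (Fin d) →C₀ ℝ) →ₗ[ℝ] (EuclideanSpace ℝ (Fin d) →C₀ ℝ))
    (t : ℝ) (f : (ℝ × EuclideanSpace ℝ (Fin d)) →C₀ ℝ) :
    ℝ × EuclideanSpace ℝ (Fin d) → ℝ :=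
  fun p => U p.1 (p.1 + t) (timeSlice f (p.1 + t)) p.2

section Aux

lemma c0_eval_le {α : Type*} [TopologicalSpace α] (g : α →C₀ ℝ) (x : α) : |g x| ≤ ‖g‖ := by
  have := BoundedContinuousFunction.norm_coe_le_norm g.toBCF x
  simpa [ZeroAtInftyContinuousMap.norm_toBCF_eq_norm] using this

lemma c0_norm_le {α : Type*} [TopologicalSpace α] (g : α →C₀ ℝ) {C : ℝ} (h0 : 0 ≤ C)
    (h : ∀ x, |g x| ≤ C) : ‖g‖ ≤ C := by
  rw [← ZeroAtInftyContinuousMap.norm_toBCF_eq_norm]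
  exact (BoundedContinuousFunction.norm_le h0).2 h

lemma c0_small {α : Type*} [NormedAddCommGroup α] (g : α →C₀ ℝ) {ε : ℝ}
    (hε : 0 < ε) : ∃ M > (0:ℝ), ∀ x : α, M < ‖x‖ → |g x| < ε := by
  have h := g.zero_at_infty'
  have h2 : g ⁻¹' Metric.ball 0 ε ∈ cocompact α := h (Metric.ball_mem_nhds (0:ℝ) hε)
  rw [mem_cocompact] at h2
  obtain ⟨K, hK, hKs⟩ := h2
  obtain ⟨r, hr⟩ := hK.isBounded.subset_closedBall 0
  refine ⟨max r 1, by positivity, fun x hx => ?_⟩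
  have hx' : x ∈ Kᶜ := by
    intro hxK
    have h3 := hr hxK
    simp only [Metric.mem_closedBall, dist_zero_right] at h3
    have : ‖x‖ ≤ max r 1 := le_trans h3 (le_max_left _ _)
    linarith
  simpa [Metric.mem_ball, Real.dist_eq] using hKs hx'

/-- norm-continuity of `r ↦ timeSlice f r`, uniform version. -/
lemma timeSlice_unif {d : ℕ} (f : (ℝ × EuclideanSpace ℝ (Fin d)) →C₀ ℝ) {ε : ℝ} (hε : 0 < ε) :
    ∃ δ > (0:ℝ), ∀ r r' : ℝ, |r - r'| < δ → ‖timeSlice f r - timeSlice f r'‖ ≤ ε := by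
  have huc : UniformContinuous (f : ℝ × EuclideanSpace ℝ (Fin d) → ℝ) :=
    ZeroAtInftyContinuousMap.uniformContinuous f
  rw [Metric.uniformContinuous_iff] at huc
  obtain ⟨δ, hδ, hd⟩ := huc ε hε
  refine ⟨δ, hδ, fun r r' hrr => ?_⟩
  apply c0_norm_le _ hε.le
  intro x
  have hdist : dist ((r, x) : ℝ × EuclideanSpace ℝ (Fin d)) (r', x) < δ := by
    rw [Prod.dist_eq]
    simpa [Real.dist_eq] using hrr
  have := hd hdist
  rw [Real.dist_eq] at this
  simpa [timeSlice] using this.le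

end Aux

lemma F_cont {d : ℕ}
    (U : ℝ → ℝ → (EuclideanSpace ℝ (Fin d) →C₀ ℝ) →ₗ[ℝ] (EuclideanSpace ℝ (Fin d) →C₀ ℝ))
    (hcontr : ∀ s t, s ≤ t → ∀ f, ‖U s t f‖ ≤ ‖f‖)
    (hcont : ∀ (f : EuclideanSpace ℝ (Fin d) →C₀ ℝ) (v w : ℝ), v ≤ w →
      Tendsto (fun p : ℝ × ℝ => ‖U p.1 p.2 f - U v w f‖)
        (𝓝[{p : ℝ × ℝ | p.1 ≤ p.2}] (v, w)) (𝓝 0))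
    {t : ℝ} (ht : 0 ≤ t) (f : (ℝ × EuclideanSpace ℝ (Fin d)) →C₀ ℝ) (s₀ : ℝ)
    {ε : ℝ} (hε : 0 < ε) :
    ∀ᶠ s in 𝓝 s₀,
      ‖U s (s+t) (timeSlice f (s+t)) - U s₀ (s₀+t) (timeSlice f (s₀+t))‖ < ε := by
  obtain ⟨δ, hδ, hslice⟩ := timeSlice_unif f (show (0:ℝ) < ε/4 by linarith)
  -- joint strong continuity along the diagonal path s ↦ (s, s+t)
  have hγ : Tendsto (fun s : ℝ => ((s, s+t) : ℝ × ℝ)) (𝓝 s₀)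
      (𝓝[{p : ℝ × ℝ | p.1 ≤ p.2}] (s₀, s₀+t)) := by
    apply tendsto_nhdsWithin_of_tendsto_nhds_of_eventually_within
    · exact (continuous_id.prodMk (continuous_id.add continuous_const)).tendsto s₀
    · exact Eventually.of_forall fun s => by simp [Set.mem_setOf_eq]; linarith
  have h2' := (hcont (timeSlice f (s₀+t)) s₀ (s₀+t) (by linarith)).comp hγ
  have h2 : Tendsto (fun s : ℝ =>
      ‖U s (s+t) (timeSlice f (s₀+t)) - U s₀ (s₀+t) (timeSlice f (s₀+t))‖) (𝓝 s₀) (𝓝 0) := h2'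
  have h3 : ∀ᶠ s in 𝓝 s₀,
      ‖U s (s+t) (timeSlice f (s₀+t)) - U s₀ (s₀+t) (timeSlice f (s₀+t))‖ < ε/2 := by
    have := Metric.tendsto_nhds.mp h2 (ε/2) (by linarith)
    filter_upwards [this] with s hs
    rwa [Real.dist_eq, sub_zero, abs_of_nonneg (norm_nonneg _)] at hs
  have h4 : ∀ᶠ s in 𝓝 s₀, |s - s₀| < δ := by
    have := Metric.ball_mem_nhds s₀ hδ
    filter_upwards [this] with s hs
    rwa [Metric.mem_ball, Real.dist_eq] at hs
  filter_upwards [h3, h4] with s hs hsδ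
  have htri := dist_triangle (U s (s+t) (timeSlice f (s+t)))
    (U s (s+t) (timeSlice f (s₀+t))) (U s₀ (s₀+t) (timeSlice f (s₀+t)))
  rw [dist_eq_norm, dist_eq_norm, dist_eq_norm] at htri
  have h5 : ‖U s (s+t) (timeSlice f (s+t)) - U s (s+t) (timeSlice f (s₀+t))‖ ≤ ε/4 := by
    rw [← map_sub]
    refine le_trans (hcontr s (s+t) (by linarith) _) ?_
    exact hslice (s+t) (s₀+t) (by simpa using hsδ)
  linarith

/-- If `U` is a Feller evolution system on `C₀(ℝ^d)`, then for every
`t ≥ 0` and `f ∈ C₀(ℝ × ℝ^d)` the function `(s,x) ↦ (U(s,s+t) f(s+t,·))(x)` vanishes at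
infinity: for every `ε > 0` there is `R > 0` with `|T(t)f(s,x)| < ε` whenever
`s² + |x|² > R²`. -/
theorem spaceTime_zero_at_infty
    (d : ℕ) (hd : 1 ≤ d)
    (U : ℝ → ℝ → (EuclideanSpace ℝ (Fin d) →C₀ ℝ) →ₗ[ℝ] (EuclideanSpace ℝ (Fin d) →C₀ ℝ))
    (hU : IsFellerEvolution U)
    (t : ℝ) (ht : 0 ≤ t) (f : (ℝ × EuclideanSpace ℝ (Fin d)) →C₀ ℝ) :
    ∀ ε > (0:ℝ), ∃ R > (0:ℝ), ∀ (s : ℝ) (x : EuclideanSpace ℝ (Fin d)),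
      R ^ 2 < s ^ 2 + ‖x‖ ^ 2 → |spaceTime U t f (s, x)| < ε := by
  obtain ⟨hcontr, hpos, hid, hcomp, hcont⟩ := hU
  intro ε hε
  have hε2 : 0 < ε/2 := by linarith
  obtain ⟨M, hM, hMf⟩ := c0_small f hε2
  obtain ⟨τ, hτ⟩ := (isCompact_Icc (a := -(M + |t| + 1)) (b := M + |t| + 1)).elim_nhds_subcover
    (fun s₀ : ℝ => {s : ℝ |
      ‖U s (s+t) (timeSlice f (s+t)) - U s₀ (s₀+t) (timeSlice f (s₀+t))‖ < ε/2})
    (fun s₀ _ => F_cont U hcontr hcont ht f s₀ hε2)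
  choose Mf hMf1 hMf2 using
    fun s₀ : ℝ => c0_small (U s₀ (s₀+t) (timeSlice f (s₀+t))) hε2
  set R₀ : ℝ := (insert (0:ℝ) (τ.image Mf)).max' (by simp) with hR₀def
  have hR₀0 : (0:ℝ) ≤ R₀ := Finset.le_max' _ 0 (by simp)
  have hR₀ : ∀ s₀ ∈ τ, Mf s₀ ≤ R₀ := fun s₀ h =>
    Finset.le_max' _ _ (Finset.mem_insert_of_mem (Finset.mem_image_of_mem _ h))
  refine ⟨M + |t| + 1 + R₀ + 1, by positivity, fun s x hsx => ?_⟩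
  have habs : |spaceTime U t f (s, x)| = |U s (s+t) (timeSlice f (s+t)) x| := rfl
  rw [habs]
  by_cases hcase : M + |t| < |s|
  · -- time coordinate large: the slice itself is uniformly small
    have hst : M < |s+t| := by
      have h1 : |s| ≤ |s+t| + |t| := by
        have := abs_add_le (s+t) (-t)
        simpa using this
      linarith
    have hsl : ‖timeSlice f (s+t)‖ ≤ ε/2 := by
      apply c0_norm_le _ hε2.le
      intro y
      refine (hMf ((s+t, y) : ℝ × EuclideanSpace ℝ (Fin d)) ?_).le
      have := norm_fst_le ((s+t, y) : ℝ × EuclideanSpace ℝ (Fin d))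
      rw [Real.norm_eq_abs] at this
      linarith
    have h2 := c0_eval_le (U s (s+t) (timeSlice f (s+t))) x
    have h3 := hcontr s (s+t) (by linarith) (timeSlice f (s+t))
    linarith
  · -- time coordinate in the compact interval: use the finite subcover
    push_neg at hcase
    have hsI : s ∈ Set.Icc (-(M + |t| + 1)) (M + |t| + 1) := by
      rw [abs_le] at hcase
      constructor <;> [linarith [hcase.1]; linarith [hcase.2]]
    obtain ⟨s₀, hs₀τ, hsV⟩ : ∃ s₀ ∈ τ, s ∈ {s : ℝ |
        ‖U s (s+t) (timeSlice f (s+t)) - U s₀ (s₀+t) (timeSlice f (s₀+t))‖ < ε/2} := by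
      have := hτ.2 hsI
      simpa using this
    have hxbig : Mf s₀ < ‖x‖ := by
      have h1 : s^2 ≤ (M + |t|)^2 := by
        nlinarith [sq_abs s, abs_nonneg s]
      have h2 : Mf s₀ ≤ R₀ := hR₀ s₀ hs₀τ
      nlinarith [norm_nonneg x, abs_nonneg t]
    have e1 := c0_eval_le (U s (s+t) (timeSlice f (s+t)) - U s₀ (s₀+t) (timeSlice f (s₀+t))) x
    have e2 := hMf2 s₀ x hxbig
    have hsV' : ‖U s (s+t) (timeSlice f (s+t)) - U s₀ (s₀+t) (timeSlice f (s₀+t))‖ < ε/2 := hsV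
    rw [ZeroAtInftyContinuousMap.sub_apply] at e1
    have e3 : |U s (s+t) (timeSlice f (s+t)) x| ≤
        |U s (s+t) (timeSlice f (s+t)) x - U s₀ (s₀+t) (timeSlice f (s₀+t)) x|
          + |U s₀ (s₀+t) (timeSlice f (s₀+t)) x| := by
      have := abs_add_le (U s (s+t) (timeSlice f (s+t)) x - U s₀ (s₀+t) (timeSlice f (s₀+t)) x)
        (U s₀ (s₀+t) (timeSlice f (s₀+t)) x)
      simpa using this
    linarith
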